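/- For every integer k ≥ 1, the equation F(6k)*x + F(6k+1)*y = (F(6k)-1)*(F(6k+1)-1)/2 has a unique solution in nonnegative integers, and that solution is x = y = (F(6k-1)-1)/2. -/

import Mathlib

lemma key13 (n : ℕ) : (Nat.fib (2*n+2))^2 + 1 =
    Nat.fib (2*n+2) * Nat.fib (2*n+1) + (Nat.fib (2*n+1))^2 := by
  induction n with
  | zero => decide
  | succ n ih =>
    simp only [show 2*(n+1)+2 = 2*n+2+2 from by ring,
      show 2*(n+1)+1 = 2*n+1+2 from by ring,
      show 2*n+2+1 = 2*n+1+2 from by ring, Nat.fib_add_two] at ih ⊢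
    nlinarith [ih]

theorem stmt_13 (k : ℕ) (hk : 1 ≤ k) :
    ∀ xy : ℕ × ℕ,
      Nat.fib (6 * k) * xy.1 + Nat.fib (6 * k + 1) * xy.2 =
        (Nat.fib (6 * k) - 1) * (Nat.fib (6 * k + 1) - 1) / 2 ↔
      xy = ((Nat.fib (6 * k - 1) - 1) / 2, (Nat.fib (6 * k - 1) - 1) / 2) := by
  obtain ⟨j, rfl⟩ : ∃ j, k = j + 1 := ⟨k - 1, by omega⟩
  intro ⟨x, y⟩
  set a := Nat.fib (6 * (j+1)) with ha
  set b := Nat.fib (6 * (j+1) + 1) with hb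
  set c := Nat.fib (6 * (j+1) - 1) with hc
  have hm3 : 6 * (j+1) - 1 = 6*j+5 := by omega
  have hbac : b = a + c := by
    rw [hb, ha, hc, hm3, show 6*(j+1)+1 = (6*j+5)+2 from by ring,
      show 6*(j+1) = (6*j+5)+1 from by ring, Nat.fib_add_two, Nat.add_comm]
  have hkey : a^2 + 1 = a * c + c^2 := by
    have := key13 (3*j+2)
    rw [show 2*(3*j+2)+2 = 6*(j+1) from by ring,
      show 2*(3*j+2)+1 = 6*j+5 from by ring] at this
    rw [ha, hc, hm3]; exact this
  have hcop : Nat.Coprime a b := Nat.fib_coprime_fib_succ _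
  have haeven : 2 ∣ a := by
    have : Nat.fib 3 ∣ a := Nat.fib_dvd 3 (6*(j+1)) ⟨2*(j+1), by ring⟩
    simpa [show Nat.fib 3 = 2 from by decide] using this
  have hcodd : ¬ 2 ∣ c := by
    intro h2c
    have : 2 ∣ Nat.gcd a b := Nat.dvd_gcd haeven (hbac ▸ Nat.dvd_add haeven h2c)
    rw [hcop] at this; omega
  have hclta : c < a := by
    rw [hc, ha, hm3, show 6*(j+1) = (6*j+5)+1 from by ring]
    exact Nat.fib_lt_fib_succ (by omega)
  have hc5 : 5 ≤ c := by
    rw [hc, hm3]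
    calc 5 = Nat.fib 5 := by decide
    _ ≤ Nat.fib (6*j+5) := Nat.fib_mono (by omega)
  -- decompose parities
  obtain ⟨s, hs⟩ : ∃ s, c = 2*s+1 := ⟨(c-1)/2, by omega⟩
  obtain ⟨u, hu⟩ : ∃ u, a = 2*u+2 := by
    obtain ⟨t, ht⟩ := haeven
    exact ⟨t - 1, by omega⟩
  -- rewrite the RHS constant
  have hN : (a - 1) * (b - 1) / 2 = (a + b) * s := by
    have h2 : (a - 1) * (b - 1) = 2 * ((a + b) * s) := by
      rw [hbac, hu, hs]
      have : (2*u+2)^2 + 1 = (2*u+2)*(2*s+1) + (2*s+1)^2 := by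
        rw [← hu, ← hs]; exact hkey
      simp only [show 2*u+2-1 = 2*u+1 from by omega,
        show 2*u+2+(2*s+1)-1 = 2*u+2*s+2 from by omega]
      nlinarith [this]
    omega
  have hsdiv : (c - 1) / 2 = s := by omega
  simp only [hN, hsdiv]
  constructor
  · intro h
    have hsa : 2 * s < a := by omega
    have hab : a < b := by omega
    have hxb : x < b := by nlinarith [h, hsa, hab, hc5]
    have hsb : s < b := by omega
    -- integer argument
    have hz : (a : ℤ) * ((x : ℤ) - s) = b * ((s : ℤ) - y) := by
      have h' : (a : ℤ) * x + b * y = (a + b) * s := by exact_mod_cast h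
      ring_nf
      ring_nf at h'
      linarith
    have hdvd : (b : ℤ) ∣ (a : ℤ) * ((x : ℤ) - s) := ⟨(s : ℤ) - y, hz⟩
    have hcopZ : IsCoprime (b : ℤ) (a : ℤ) := by
      rw [Nat.isCoprime_iff_coprime]; exact hcop.symm
    have hbx : (b : ℤ) ∣ ((x : ℤ) - s) := hcopZ.dvd_of_dvd_mul_left hdvd
    have hx0 : (x : ℤ) - s = 0 := by
      refine Int.eq_zero_of_abs_lt_dvd hbx ?_
      rw [abs_lt]
      constructor <;> [push_cast; push_cast] <;> omega
    have hx : x = s := by omega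
    have hy : y = s := by
      have hbpos : 0 < b := Nat.fib_pos.mpr (by omega)
      have : b * y = b * s := by
        rw [hx] at h
        have : a * s + b * y = a * s + b * s := by linarith [h]
        omega
      exact Nat.eq_of_mul_eq_mul_left hbpos this
    rw [Prod.mk.injEq]
    exact ⟨hx, hy⟩
  · intro h
    rw [Prod.mk.injEq] at h
    obtain ⟨rfl, rfl⟩ := h
    ring
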